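/- Let n ≥ 2 and let A and B be symmetric (n+1)×(n+1) complex matrices whose pencil has generic corank r ≥ 1 and non-constant vertices. Let d be the dimension of the linear subspace ⋂ ker(A+tB), the intersection taken over all t ∈ ℂ with corank(A+tB) = r. Then 3r ≤ n + 2d + 1. (In projective terms: if the common intersection of the vertices of the generic members has projective dimension s = d − 1, then r ≤ (n + 2s + 3)/3.) -/

import Mathlib

open Matrix

set_option maxRecDepth 4000
set_option synthInstance.maxHeartbeats 1000000
set_option maxHeartbeats 1000000
open Matrix

/-- A nonzero polynomial condition: if `det P ≠ 0`, there is `s ≠ 0` with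
`det (P + s • Q) ≠ 0`. -/
lemma exists_ne_zero_det_add_smul_ne_zero {k : ℕ} (P Q : Matrix (Fin k) (Fin k) ℂ)
    (hP : P.det ≠ 0) : ∃ s : ℂ, s ≠ 0 ∧ (P + s • Q).det ≠ 0 := by
  set R : Matrix (Fin k) (Fin k) (Polynomial ℂ) :=
    P.map Polynomial.C + (Polynomial.X : Polynomial ℂ) • Q.map Polynomial.C with hR
  have heval : ∀ s : ℂ, (P + s • Q).det = Polynomial.eval s R.det := by
    intro s
    have hmap : (Polynomial.evalRingHom s).mapMatrix R = P + s • Q := by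
      ext i j
      show Polynomial.eval s (R i j) = P i j + s * Q i j
      have : R i j = Polynomial.C (P i j) + Polynomial.X * Polynomial.C (Q i j) := by
        rw [hR]
        rfl
      rw [this, Polynomial.eval_add, Polynomial.eval_mul, Polynomial.eval_X, Polynomial.eval_C,
        Polynomial.eval_C]
    rw [← hmap, ← RingHom.map_det]
    rfl
  have hR0 : R.det ≠ 0 := by
    intro h
    apply hP
    have := heval 0
    rw [h] at this
    simpa using this
  have hfin : ({x : ℂ | Polynomial.IsRoot R.det x} ∪ {0}).Finite :=
    (Polynomial.finite_setOf_isRoot hR0).union (Set.finite_singleton 0)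
  obtain ⟨s, hs⟩ := hfin.infinite_compl.nonempty
  simp only [Set.mem_compl_iff, Set.mem_union, Set.mem_setOf_eq, Set.mem_singleton_iff,
    not_or] at hs
  exact ⟨s, hs.2, by rw [heval]; exact hs.1⟩

/-- **Key lemma.** If `M`, `B` are symmetric and the rank of `M + s • B` never exceeds
that of `M`, then the kernel of `M` is isotropic for `B` (quadratic version). -/
lemma ker_isotropic {N : ℕ} (M B : Matrix (Fin N) (Fin N) ℂ) (hM : M.IsSymm)
    (hrank : ∀ s : ℂ, (M + s • B).rank ≤ M.rank)
    (z : Fin N → ℂ) (hz : M *ᵥ z = 0) : z ⬝ᵥ (B *ᵥ z) = 0 := by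
  by_contra hzz
  set m := M.rank with hm
  set Rg := LinearMap.range M.mulVecLin with hRg
  have hfr : Module.finrank ℂ Rg = m := rfl
  let b : Module.Basis (Fin m) ℂ Rg := Module.finBasisOfFinrankEq ℂ Rg hfr
  set w : Fin m → (Fin N → ℂ) := fun i => (b i : Fin N → ℂ) with hwdef
  have hw : ∀ i, ∃ y, M *ᵥ y = w i := fun i => (b i).2
  choose u hu using hw
  -- `B *ᵥ z` is not in the range of `M`
  have hMsymm : ∀ (v y : Fin N → ℂ), v ⬝ᵥ (M *ᵥ y) = (M *ᵥ v) ⬝ᵥ y := by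
    intro v y
    rw [Matrix.dotProduct_mulVec, ← Matrix.mulVec_transpose, hM.eq]
  have hBz : B *ᵥ z ∉ Rg := by
    rintro ⟨y, hy⟩
    apply hzz
    rw [Matrix.mulVecLin_apply] at hy
    rw [← hy, hMsymm, hz, zero_dotProduct]
  have hspan : Submodule.span ℂ (Set.range w) = Rg := by
    have : Set.range w = Rg.subtype '' Set.range b :=
      Set.range_comp Rg.subtype b
    rw [this, ← Submodule.map_span, b.span_eq, Submodule.map_top, Submodule.range_subtype]
  have hind : LinearIndependent ℂ (Fin.snoc w (B *ᵥ z) : Fin (m + 1) → (Fin N → ℂ)) := by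
    refine linearIndependent_fin_snoc.mpr ⟨?_, ?_⟩
    · exact b.linearIndependent.map' Rg.subtype Rg.ker_subtype
    · rw [hspan]; exact hBz
  -- the column matrices
  set C0 : Matrix (Fin N) (Fin (m + 1)) ℂ :=
    Matrix.of fun i j => (Fin.snoc w (B *ᵥ z) : Fin (m + 1) → (Fin N → ℂ)) j i with hC0
  set C1 : Matrix (Fin N) (Fin (m + 1)) ℂ :=
    Matrix.of fun i j => (Fin.snoc (fun k => B *ᵥ u k) (0 : Fin N → ℂ)
      : Fin (m + 1) → (Fin N → ℂ)) j i with hC1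
  have hcol : ∀ (C : Matrix (Fin N) (Fin (m + 1)) ℂ) (v : Fin (m + 1) → ℂ),
      C *ᵥ v = ∑ j, v j • (fun i => C i j) := by
    intro C v
    funext i
    rw [Finset.sum_apply]
    simp [Matrix.mulVec, dotProduct, mul_comm]
  have hC0inj : Function.Injective C0.mulVecLin := by
    rw [← LinearMap.ker_eq_bot]
    rw [Submodule.eq_bot_iff]
    intro v hv
    rw [LinearMap.mem_ker, Matrix.mulVecLin_apply, hcol] at hv
    have := Fintype.linearIndependent_iff.mp hind v hv
    funext j; exact this j
  obtain ⟨g, hg⟩ := C0.mulVecLin.exists_leftInverse_of_injective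
    (LinearMap.ker_eq_bot.mpr hC0inj)
  set L : Matrix (Fin (m + 1)) (Fin N) ℂ := LinearMap.toMatrix' g with hL
  have hLC0 : L * C0 = 1 := by
    apply LinearMap.toMatrix'.symm.injective
    show Matrix.toLin' (L * C0) = Matrix.toLin' 1
    rw [Matrix.toLin'_apply', Matrix.toLin'_apply', Matrix.mulVecLin_mul, Matrix.mulVecLin_one,
      hL, ← Matrix.toLin'_apply', Matrix.toLin'_toMatrix']
    exact hg
  obtain ⟨s, hs0, hsdet⟩ := exists_ne_zero_det_add_smul_ne_zero (L * C0) (L * C1)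
    (by rw [hLC0]; simp)
  have hfact : L * (C0 + s • C1) = (L * C0) + s • (L * C1) := by
    rw [Matrix.mul_add, Matrix.mul_smul]
  have hinj2 : Function.Injective (C0 + s • C1).mulVecLin := by
    rw [← LinearMap.ker_eq_bot, Matrix.ker_mulVecLin_eq_bot_iff]
    intro v hv
    have hdet : IsUnit (L * (C0 + s • C1)).det := by
      rw [hfact]; exact isUnit_iff_ne_zero.mpr hsdet
    have h1 : (L * (C0 + s • C1)) *ᵥ v = 0 := by
      rw [← Matrix.mulVec_mulVec, hv, Matrix.mulVec_zero]
    calc v = ((L * (C0 + s • C1))⁻¹ * (L * (C0 + s • C1))) *ᵥ v := by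
          rw [Matrix.nonsing_inv_mul _ hdet, Matrix.one_mulVec]
      _ = (L * (C0 + s • C1))⁻¹ *ᵥ ((L * (C0 + s • C1)) *ᵥ v) := by
          rw [Matrix.mulVec_mulVec]
      _ = 0 := by rw [h1, Matrix.mulVec_zero]
  have hrk : (C0 + s • C1).rank = m + 1 := by
    have h2 : (C0 + s • C1).rank
        = Module.finrank ℂ (LinearMap.range (C0 + s • C1).mulVecLin) := rfl
    rw [h2, LinearMap.finrank_range_of_inj hinj2, Module.finrank_pi, Fintype.card_fin]
  set Umat : Matrix (Fin N) (Fin (m + 1)) ℂ :=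
    Matrix.of fun i j => (Fin.snoc u z : Fin (m + 1) → (Fin N → ℂ)) j i with hUm
  set D : Matrix (Fin (m + 1)) (Fin (m + 1)) ℂ :=
    Matrix.diagonal (Fin.snoc (fun _ => (1 : ℂ)) s) with hD
  set D' : Matrix (Fin (m + 1)) (Fin (m + 1)) ℂ :=
    Matrix.diagonal (Fin.snoc (fun _ => (1 : ℂ)) s⁻¹) with hD'
  have hDD' : D * D' = 1 := by
    rw [hD, hD', Matrix.diagonal_mul_diagonal]
    have hone : (fun i => (Fin.snoc (fun _ => (1 : ℂ)) s : Fin (m + 1) → ℂ) i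
          * (Fin.snoc (fun _ => (1 : ℂ)) s⁻¹ : Fin (m + 1) → ℂ) i)
        = fun _ => (1 : ℂ) := by
      funext j
      refine Fin.lastCases ?_ ?_ j
      · simp [mul_inv_cancel₀ hs0]
      · intro k; simp
    rw [hone, Matrix.diagonal_one]
  have hMU : (M + s • B) * Umat = (C0 + s • C1) * D := by
    ext i j
    rw [hD, Matrix.mul_diagonal]
    have hlhs : ((M + s • B) * Umat) i j
        = ((M + s • B) *ᵥ ((Fin.snoc u z : Fin (m + 1) → (Fin N → ℂ)) j)) i := rfl
    rw [hlhs]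
    refine Fin.lastCases ?_ ?_ j
    · simp only [Fin.snoc_last, Matrix.add_mulVec, Matrix.smul_mulVec, hz]
      rw [hC0, hC1]
      simp [Fin.snoc_last]
      ring
    · intro k
      simp only [Fin.snoc_castSucc, Matrix.add_mulVec, Matrix.smul_mulVec, hu]
      rw [hC0, hC1]
      simp [Fin.snoc_castSucc]
  have hle : (m + 1 : ℕ) ≤ (M + s • B).rank := by
    have h1 : C0 + s • C1 = ((M + s • B) * Umat) * D' := by
      rw [hMU, Matrix.mul_assoc, hDD', Matrix.mul_one]
    calc (m + 1 : ℕ) = (C0 + s • C1).rank := hrk.symm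
      _ = (((M + s • B) * Umat) * D').rank := by rw [h1]
      _ ≤ ((M + s • B) * Umat).rank := Matrix.rank_mul_le_left _ _
      _ ≤ (M + s • B).rank := Matrix.rank_mul_le_left _ _
  exact absurd (hrank s) (by omega)

/-- **Segre.** Let `n ≥ 2` and let `A`, `B` be symmetric `(n+1)×(n+1)`
complex matrices whose pencil has generic corank `r ≥ 1` and non-constant vertices.
Let `d` be the dimension of the intersection `⋂ ker(A + tB)` over all `t` with
`corank(A + tB) = r`.  Then `3r ≤ n + 2d + 1`. -/
theorem vertex_intersection_bound (n r : ℕ) (hn : 2 ≤ n) (hr : 1 ≤ r)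
    (A B : Matrix (Fin (n + 1)) (Fin (n + 1)) ℂ)
    (hA : A.IsSymm) (hB : B.IsSymm)
    (hge : ∀ t : ℂ, (A + t • B).rank + r ≤ n + 1)
    (hmin : ∃ t : ℂ, (A + t • B).rank + r = n + 1)
    (hnc : ∃ t₁ t₂ : ℂ, (A + t₁ • B).rank + r = n + 1 ∧ (A + t₂ • B).rank + r = n + 1 ∧
      LinearMap.ker (A + t₁ • B).mulVecLin ≠ LinearMap.ker (A + t₂ • B).mulVecLin)
    (d : ℕ)
    (hd : d = Module.finrank ℂ
      ↥(⨅ t ∈ {t : ℂ | (A + t • B).rank + r = n + 1}, LinearMap.ker (A + t • B).mulVecLin)) :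
    3 * r ≤ n + 2 * d + 1 := by
  classical
  obtain ⟨t₁, t₂, h₁, h₂, hne⟩ := hnc
  have ht : t₁ ≠ t₂ := by rintro rfl; exact hne rfl
  have hsymm : ∀ t : ℂ, (A + t • B).IsSymm := by
    intro t
    rw [Matrix.IsSymm, Matrix.transpose_add, Matrix.transpose_smul, hA.eq, hB.eq]
  -- quadratic isotropy of the kernel at `t₂`
  have hiso : ∀ x, (A + t₂ • B) *ᵥ x = 0 → x ⬝ᵥ (B *ᵥ x) = 0 := by
    intro x hx
    refine ker_isotropic (A + t₂ • B) B (hsymm t₂) ?_ x hx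
    intro s
    have hrw : (A + t₂ • B) + s • B = A + (t₂ + s) • B := by
      rw [add_smul, ← add_assoc]
    rw [hrw]
    have := hge (t₂ + s)
    omega
  -- polarized isotropy on `K₂`
  have hswap : ∀ v y : Fin (n + 1) → ℂ, v ⬝ᵥ (B *ᵥ y) = y ⬝ᵥ (B *ᵥ v) := by
    intro v y
    rw [Matrix.dotProduct_mulVec, ← Matrix.mulVec_transpose, hB.eq, dotProduct_comm]
  have hiso2 : ∀ b e, (A + t₂ • B) *ᵥ b = 0 → (A + t₂ • B) *ᵥ e = 0 →
      b ⬝ᵥ (B *ᵥ e) = 0 := by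
    intro b e hb he
    have h3 := hiso (b + e) (by rw [Matrix.mulVec_add, hb, he, add_zero])
    rw [Matrix.mulVec_add, dotProduct_add, add_dotProduct,
      add_dotProduct, hiso b hb, hiso e he, hswap e b] at h3
    have : b ⬝ᵥ (B *ᵥ e) + b ⬝ᵥ (B *ᵥ e) = 0 := by linear_combination h3
    exact add_self_eq_zero.mp this
  set K₁ := LinearMap.ker (A + t₁ • B).mulVecLin with hK₁
  set K₂ := LinearMap.ker (A + t₂ • B).mulVecLin with hK₂
  set U := K₁ ⊔ K₂ with hU
  -- total isotropy of `U` for `A + t₁ • B`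
  have hUiso : ∀ v ∈ U, ∀ y ∈ U, v ⬝ᵥ ((A + t₁ • B) *ᵥ y) = 0 := by
    intro v hv y hy
    obtain ⟨a, ha, b, hb, rfl⟩ := Submodule.mem_sup.mp hv
    obtain ⟨c, hc, e, he, rfl⟩ := Submodule.mem_sup.mp hy
    have hac : (A + t₁ • B) *ᵥ c = 0 := hc
    have hbe : (A + t₂ • B) *ᵥ e = 0 := he
    have hbb : (A + t₂ • B) *ᵥ b = 0 := hb
    have haa : (A + t₁ • B) *ᵥ a = 0 := ha
    have hMe : (A + t₁ • B) *ᵥ e = (t₁ - t₂) • (B *ᵥ e) := by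
      have hsplit : A + t₁ • B = (A + t₂ • B) + (t₁ - t₂) • B := by
        rw [add_assoc, ← add_smul]
        ring_nf
      rw [hsplit, Matrix.add_mulVec, hbe, zero_add, Matrix.smul_mulVec]
    have hsym1 : ∀ q : Fin (n + 1) → ℂ, a ⬝ᵥ ((A + t₁ • B) *ᵥ q) = 0 := by
      intro q
      rw [Matrix.dotProduct_mulVec, ← Matrix.mulVec_transpose, (hsymm t₁).eq, haa,
        zero_dotProduct]
    rw [Matrix.mulVec_add, hac, zero_add, add_dotProduct, hsym1, hMe,
      dotProduct_smul, hiso2 b e hbb hbe, smul_zero, add_zero]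
  -- dimension bookkeeping
  have hdim : ∀ t : ℂ, (A + t • B).rank
      + Module.finrank ℂ (LinearMap.ker (A + t • B).mulVecLin) = n + 1 := by
    intro t
    have h := LinearMap.finrank_range_add_finrank_ker (A + t • B).mulVecLin
    rw [Module.finrank_pi, Fintype.card_fin] at h
    exact h
  have hrK₁ : Module.finrank ℂ K₁ = r := by have := hdim t₁; rw [← hK₁] at this; omega
  have hrK₂ : Module.finrank ℂ K₂ = r := by have := hdim t₂; rw [← hK₂] at this; omega
  -- the intersection of all generic kernels is `K₁ ⊓ K₂`
  have hinf : (⨅ t ∈ {t : ℂ | (A + t • B).rank + r = n + 1},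
      LinearMap.ker (A + t • B).mulVecLin) = K₁ ⊓ K₂ := by
    apply le_antisymm
    · exact le_inf (iInf₂_le t₁ h₁) (iInf₂_le t₂ h₂)
    · intro x hx
      have hx1 : (A + t₁ • B) *ᵥ x = 0 := hx.1
      have hx2 : (A + t₂ • B) *ᵥ x = 0 := hx.2
      have hBx : B *ᵥ x = 0 := by
        have hsub : (t₁ - t₂) • (B *ᵥ x) = 0 := by
          have : (A + t₁ • B) *ᵥ x - (A + t₂ • B) *ᵥ x = (t₁ - t₂) • (B *ᵥ x) := by
            rw [Matrix.add_mulVec, Matrix.add_mulVec, Matrix.smul_mulVec,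
              Matrix.smul_mulVec, sub_smul]
            abel
          rw [← this, hx1, hx2, sub_zero]
        rcases smul_eq_zero.mp hsub with h | h
        · exact absurd (sub_eq_zero.mp h) ht
        · exact h
      have hAx : A *ᵥ x = 0 := by
        have := hx1
        rw [Matrix.add_mulVec, Matrix.smul_mulVec, hBx, smul_zero, add_zero] at this
        exact this
      simp only [Submodule.mem_iInf]
      intro t _
      show (A + t • B) *ᵥ x = 0
      rw [Matrix.add_mulVec, Matrix.smul_mulVec, hAx, hBx, smul_zero, add_zero]
  have hd' : d = Module.finrank ℂ ↥(K₁ ⊓ K₂) := by rw [hd, hinf]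
  have hsup : Module.finrank ℂ ↥U + d = r + r := by
    rw [hd', hU, Submodule.finrank_sup_add_finrank_inf_eq, hrK₁, hrK₂]
  -- the isotropic-subspace dimension bound
  set ψ : U →ₗ[ℂ] (Fin (n + 1) → ℂ) := (A + t₁ • B).mulVecLin ∘ₗ U.subtype with hψ
  set Θfull : (Fin (n + 1) → ℂ) →ₗ[ℂ] Module.Dual ℂ (Fin (n + 1) → ℂ) :=
    { toFun := fun y =>
        { toFun := fun v => v ⬝ᵥ y
          map_add' := fun v₁ v₂ => add_dotProduct v₁ v₂ y
          map_smul' := fun c v => smul_dotProduct c v y }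
      map_add' := fun y₁ y₂ => LinearMap.ext fun v => dotProduct_add v y₁ y₂
      map_smul' := fun c y => LinearMap.ext fun v => dotProduct_smul c v y }
    with hΘfull
  have hΘfull_inj : Function.Injective Θfull := by
    intro y₁ y₂ hy
    funext i
    have h := DFunLike.congr_fun hy (Pi.single i (1 : ℂ))
    have h' : Pi.single i (1 : ℂ) ⬝ᵥ y₁ = Pi.single i (1 : ℂ) ⬝ᵥ y₂ := h
    simpa [single_dotProduct] using h'
  have hΘfull_surj : Function.Surjective Θfull := by
    have hfr : Module.finrank ℂ (Fin (n + 1) → ℂ)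
        = Module.finrank ℂ (Module.Dual ℂ (Fin (n + 1) → ℂ)) :=
      (Subspace.dual_finrank_eq).symm
    exact (LinearMap.injective_iff_surjective_of_finrank_eq_finrank hfr).mp hΘfull_inj
  set Θ : (Fin (n + 1) → ℂ) →ₗ[ℂ] Module.Dual ℂ U := U.subtype.dualMap ∘ₗ Θfull with hΘ
  have hΘsurj : Function.Surjective Θ := by
    rw [hΘ, LinearMap.coe_comp]
    exact (LinearMap.dualMap_surjective_of_injective U.injective_subtype).comp hΘfull_surj
  have hrangeψ : LinearMap.range ψ ≤ LinearMap.ker Θ := by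
    rintro _ ⟨u, rfl⟩
    rw [LinearMap.mem_ker]
    apply LinearMap.ext
    intro u'
    show (↑u' : Fin (n + 1) → ℂ) ⬝ᵥ ((A + t₁ • B) *ᵥ ↑u) = 0
    exact hUiso _ u'.2 _ u.2
  have h4 := LinearMap.finrank_range_add_finrank_ker ψ
  have h5 : Module.finrank ℂ (LinearMap.ker ψ) = r := by
    have hle : K₁ ≤ U := le_sup_left
    have hker : LinearMap.ker ψ = Submodule.comap U.subtype K₁ := by
      rw [hψ, LinearMap.ker_comp, hK₁]
    rw [hker, (Submodule.comapSubtypeEquivOfLe hle).finrank_eq, hrK₁]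
  have h1 : Module.finrank ℂ (LinearMap.range ψ) ≤ Module.finrank ℂ (LinearMap.ker Θ) :=
    Submodule.finrank_mono hrangeψ
  have h2 := LinearMap.finrank_range_add_finrank_ker Θ
  rw [Module.finrank_pi, Fintype.card_fin] at h2
  have h3 : Module.finrank ℂ (LinearMap.range Θ) = Module.finrank ℂ U := by
    rw [LinearMap.range_eq_top.mpr hΘsurj, finrank_top, Subspace.dual_finrank_eq]
  omega
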